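/- Let W = ⊕_{i=1}^m I[b_i, d_i] be a representation of A_w where the collection {I[b_i,d_i]} is vertical (all pairs (b_i,d_i) distinct and b_i + d_i = 2μ for a common μ). Then every endomorphism φ of W is diagonal with respect to this decomposition: the component of φ from the i-th summand to the j-th summand is zero whenever i ≠ j, and the component from the i-th summand to itself is a scalar multiple of the identity. -/

import Mathlib

open scoped Classical

/-- A persistence module over a poset `P`: a functor `P → vect_K`. -/
structure PersMod (K : Type) [Field K] (P : Type) [Preorder P] : Type 1 where
  V : P → Type
  [acg : ∀ p, AddCommGroup (V p)]
  [mod : ∀ p, Module K (V p)]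
  map : ∀ {p q : P}, p ≤ q → (V p →ₗ[K] V q)
  map_id : ∀ p : P, map (le_refl p) = LinearMap.id
  map_comp : ∀ {p q r : P} (hpq : p ≤ q) (hqr : q ≤ r),
    map (le_trans hpq hqr) = (map hqr).comp (map hpq)

attribute [instance] PersMod.acg PersMod.mod

variable {K : Type} [Field K] {P : Type} [Preorder P]

/-- The space of morphisms (natural transformations) between two persistence modules,
as a submodule of the product of the spaces of linear maps. -/
def HomSpace (M N : PersMod K P) : Submodule K (∀ p, M.V p →ₗ[K] N.V p) where
  carrier := {f | ∀ (p q : P) (h : p ≤ q), (N.map h).comp (f p) = (f q).comp (M.map h)}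
  add_mem' := by
    intro f g hf hg p q h
    simp only [Pi.add_apply, LinearMap.comp_add, LinearMap.add_comp, hf p q h, hg p q h]
  zero_mem' := by intro p q h; simp
  smul_mem' := by
    intro c f hf p q h
    simp only [Pi.smul_apply, LinearMap.comp_smul, LinearMap.smul_comp, hf p q h]

/-- Helper: an element of the zero part of an interval module is zero. -/
lemma seg_val_zero {c : Prop} {inst : Decidable c} (h : ¬c)
    (x : ↥(@ite _ c inst (⊤ : Submodule K K) ⊥)) :
    (x : K) = 0 := by
  obtain ⟨v, hv⟩ := x
  rw [if_neg h] at hv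
  exact (Submodule.mem_bot K).mp hv

/-- The interval (segment / rectangle) module `I[a,b]`: value `K` on points `x` with
`a ≤ x ≤ b`, zero elsewhere, identity internal maps. -/
noncomputable def seg (a b : P) : PersMod K P where
  V x := ↥(if a ≤ x ∧ x ≤ b then (⊤ : Submodule K K) else ⊥)
  map {x y} hxy :=
    { toFun := fun c => ⟨if a ≤ x ∧ y ≤ b then (c : K) else 0, by
        by_cases hc : a ≤ x ∧ y ≤ b
        · rw [if_pos hc, if_pos ⟨le_trans hc.1 hxy, hc.2⟩]; trivial
        · rw [if_neg hc]; exact Submodule.zero_mem _⟩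
      map_add' := by
        intro c d; apply Subtype.ext
        by_cases hc : a ≤ x ∧ y ≤ b <;> simp [hc]
      map_smul' := by
        intro r c; apply Subtype.ext
        by_cases hc : a ≤ x ∧ y ≤ b <;> simp [hc] }
  map_id := by
    intro p
    apply LinearMap.ext; intro c
    apply Subtype.ext
    show (if a ≤ p ∧ p ≤ b then (c : K) else 0) = (c : K)
    by_cases hc : a ≤ p ∧ p ≤ b
    · rw [if_pos hc]
    · rw [seg_val_zero hc c, ite_self]
  map_comp := by
    intro p q r hpq hqr
    apply LinearMap.ext; intro c
    apply Subtype.ext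
    show (if a ≤ p ∧ r ≤ b then (c : K) else 0)
      = (if a ≤ q ∧ r ≤ b then (if a ≤ p ∧ q ≤ b then (c : K) else 0) else 0)
    by_cases h1 : a ≤ p ∧ r ≤ b
    · rw [if_pos h1,
        if_pos (show a ≤ q ∧ r ≤ b from ⟨le_trans h1.1 hpq, h1.2⟩),
        if_pos (show a ≤ p ∧ q ≤ b from ⟨h1.1, le_trans hqr h1.2⟩)]
    · rw [if_neg h1]
      by_cases h2 : a ≤ q ∧ r ≤ b
      · rw [if_pos h2, if_neg (fun h3 => h1 ⟨h3.1, h2.2⟩)]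
      · rw [if_neg h2]

/-- The canonical morphism `I[a,b] → I[c,d]`: identity on the intersection, zero elsewhere. -/
noncomputable def canonMap (a b c d : P) (p : P) :
    (seg (K := K) a b).V p →ₗ[K] (seg (K := K) c d).V p where
  toFun v := ⟨if c ≤ p ∧ p ≤ d then v.1 else 0, by
    by_cases hc : c ≤ p ∧ p ≤ d
    · simp only [if_pos hc]; trivial
    · simp only [if_neg hc]; exact Submodule.zero_mem _⟩
  map_add' := by
    intro v w; apply Subtype.ext
    show (if c ≤ p ∧ p ≤ d then (v + w).1 else 0)
      = (if c ≤ p ∧ p ≤ d then v.1 else 0) + (if c ≤ p ∧ p ≤ d then w.1 else 0)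
    by_cases hc : c ≤ p ∧ p ≤ d
    · simp only [if_pos hc]; rfl
    · simp only [if_neg hc]; simp
  map_smul' := by
    intro r v; apply Subtype.ext
    show (if c ≤ p ∧ p ≤ d then (r • v).1 else 0) = r • (if c ≤ p ∧ p ≤ d then v.1 else 0)
    by_cases hc : c ≤ p ∧ p ≤ d
    · simp only [if_pos hc]; rfl
    · simp only [if_neg hc]; simp

/-- Finite direct sum of persistence modules. -/
noncomputable def dsum {m : ℕ} (M : Fin m → PersMod K P) : PersMod K P where
  V p := ∀ i, (M i).V p
  map h := LinearMap.pi (fun i => ((M i).map h).comp (LinearMap.proj i))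
  map_id := by
    intro p
    apply LinearMap.ext; intro v; funext i
    simp [LinearMap.pi, (M i).map_id]
  map_comp := by
    intro p q r h1 h2
    apply LinearMap.ext; intro v; funext i
    simp [LinearMap.pi, (M i).map_comp h1 h2]

/-- Direct sum of two persistence modules. -/
noncomputable def dsum2 (A B : PersMod K P) : PersMod K P where
  V p := A.V p × B.V p
  map h := (A.map h).prodMap (B.map h)
  map_id := by
    intro p
    show (A.map (le_refl p)).prodMap (B.map (le_refl p)) = LinearMap.id
    rw [A.map_id, B.map_id]
    exact LinearMap.prodMap_id
  map_comp := by
    intro p q r h1 h2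
    show (A.map (le_trans h1 h2)).prodMap (B.map (le_trans h1 h2))
      = ((A.map h2).prodMap (B.map h2)).comp ((A.map h1).prodMap (B.map h1))
    rw [A.map_comp h1 h2, B.map_comp h1 h2]
    exact (LinearMap.prodMap_comp _ _ _ _).symm

/-- Isomorphism of persistence modules. -/
def PersIso (M N : PersMod K P) : Prop :=
  ∃ f ∈ HomSpace M N, ∀ p, Function.Bijective (f p)

/-- The endomorphism algebra of a persistence module. -/
def EndAlg (M : PersMod K P) : Subalgebra K (∀ p, Module.End K (M.V p)) where
  carrier := {f | ∀ (p q : P) (h : p ≤ q), (M.map h).comp (f p) = (f q).comp (M.map h)}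
  add_mem' := by
    intro f g hf hg p q h
    simp only [Pi.add_apply, LinearMap.comp_add, LinearMap.add_comp, hf p q h, hg p q h]
  mul_mem' := by
    intro f g hf hg p q h
    show (M.map h).comp ((f p).comp (g p)) = ((f q).comp (g q)).comp (M.map h)
    rw [← LinearMap.comp_assoc, hf p q h, LinearMap.comp_assoc, hg p q h,
      LinearMap.comp_assoc]
  one_mem' := by intro p q h; rfl
  algebraMap_mem' := by
    intro c p q h
    apply LinearMap.ext; intro v
    simp only [Pi.algebraMap_apply, Module.algebraMap_end_eq_smul_id, LinearMap.comp_apply,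
      LinearMap.smul_apply, LinearMap.id_apply, map_smul]

/-- Restriction of a `ℤ×ℤ`-persistence module along a monotone map (a "line"). -/
noncomputable def restrict (L : ℤ → ℤ × ℤ) (hL : Monotone L) (M : PersMod K (ℤ × ℤ)) :
    PersMod K ℤ where
  V i := M.V (L i)
  map h := M.map (hL h)
  map_id := fun p => M.map_id (L p)
  map_comp := fun h1 h2 => M.map_comp (hL h1) (hL h2)


/-- Coercion formula for the internal maps of an interval module. -/
lemma seg_map_coe (a c : P) {p q : P} (h : p ≤ q) (v : (seg (K := K) a c).V p) :
    ((seg (K := K) a c).map h v).1 = if a ≤ p ∧ q ≤ c then v.1 else 0 := rfl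

/-- Direct sum map on a single-component vector. -/
lemma dsum_map_single {m : ℕ} (M : Fin m → PersMod K P) {p q : P} (h : p ≤ q)
    (i : Fin m) (v : (M i).V p) :
    (dsum (K := K) M).map h (Pi.single i v) = Pi.single i ((M i).map h v) := by
  funext k
  have hk1 : (dsum (K := K) M).map h (Pi.single i v) k
      = (M k).map h (Pi.single (M := fun j => (M j).V p) i v k) := rfl
  rw [hk1]
  by_cases hk : k = i
  · subst hk; simp
  · rw [Pi.single_eq_of_ne hk, Pi.single_eq_of_ne hk, map_zero]

/-- Every endomorphism of a direct sum of a vertical collection of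
intervals is diagonal, with scalar diagonal entries. -/
theorem stmt_3 (K : Type) [Field K] (w m : ℕ) (b d : Fin m → ℤ) (mu2 : ℤ)
    (hrange : ∀ i, 0 ≤ b i ∧ b i ≤ d i ∧ d i ≤ (w : ℤ) - 1)
    (hdist : ∀ i j, (b i, d i) = (b j, d j) → i = j)
    (hvert : ∀ i, b i + d i = mu2)
    (phi : ∀ p : ℤ, (dsum (K := K) fun i => seg (b i) (d i)).V p →ₗ[K]
      (dsum (K := K) fun i => seg (b i) (d i)).V p)
    (hphi : phi ∈ HomSpace (dsum fun i => seg (b i) (d i)) (dsum fun i => seg (b i) (d i))) :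
    (∀ i j, i ≠ j → ∀ (p : ℤ) (v : (seg (K := K) (b i) (d i)).V p),
      phi p (Pi.single i v) j = 0) ∧
    (∀ i, ∃ c : K, ∀ (p : ℤ) (v : (seg (K := K) (b i) (d i)).V p),
      phi p (Pi.single i v) i = c • v) := by
  -- componentwise naturality
  have nat : ∀ (i j : Fin m) (p q : ℤ) (h : p ≤ q) (v : (seg (K := K) (b i) (d i)).V p),
      (seg (K := K) (b j) (d j)).map h (phi p (Pi.single i v) j)
        = phi q (Pi.single i ((seg (K := K) (b i) (d i)).map h v)) j := by
    intro i j p q h v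
    have h1 := LinearMap.congr_fun (hphi p q h) (Pi.single i v)
    change (dsum (K := K) fun i => seg (b i) (d i)).map h (phi p (Pi.single i v))
      = phi q ((dsum (K := K) fun i => seg (b i) (d i)).map h (Pi.single i v)) at h1
    rw [dsum_map_single (fun i => seg (K := K) (b i) (d i)) h i v] at h1
    exact congrFun h1 j
  constructor
  · intro i j hij p v
    by_cases hpj : b j ≤ p ∧ p ≤ d j
    · have hbne : b i ≠ b j := by
        intro hb
        apply hij
        apply hdist
        have : d i = d j := by have := hvert i; have := hvert j; omega
        rw [hb, this]
      rcases lt_or_gt_of_ne hbne with hlt | hgt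
      · -- b i < b j, hence d j < d i : propagate from b i
        have hdj : d j < d i := by have := hvert i; have := hvert j; omega
        have hbi : b i ≤ p := le_trans (le_of_lt hlt) hpj.1
        have hw : b i ≤ b i ∧ b i ≤ d i := ⟨le_refl _, (hrange i).2.1⟩
        set wv : (seg (K := K) (b i) (d i)).V (b i) :=
          ⟨v.1, by rw [if_pos hw]; trivial⟩ with hwdef
        have hmapw : (seg (K := K) (b i) (d i)).map hbi wv = v := by
          apply Subtype.ext
          rw [seg_map_coe, if_pos ⟨le_refl _, le_trans hpj.2 (le_of_lt hdj)⟩]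
        have hn := nat i j (b i) p hbi wv
        rw [hmapw] at hn
        apply Subtype.ext
        have hc := congrArg Subtype.val hn
        rw [seg_map_coe, if_neg (fun hh => absurd hh.1 (not_le.mpr hlt))] at hc
        exact hc.symm
      · -- b j < b i, hence d i < d j : propagate to d j
        have hdi : d i < d j := by have := hvert i; have := hvert j; omega
        have hpd : p ≤ d j := hpj.2
        have hmapv : (seg (K := K) (b i) (d i)).map hpd v = 0 := by
          apply Subtype.ext
          rw [seg_map_coe, if_neg (fun hh => absurd hh.2 (not_le.mpr hdi))]
          rfl
        have hn := nat i j p (d j) hpd v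
        rw [hmapv] at hn
        have hz : Pi.single (M := fun k => (seg (K := K) (b k) (d k)).V (d j)) i
            (0 : (seg (K := K) (b i) (d i)).V (d j)) = 0 := Pi.single_zero i
        rw [hz] at hn
        erw [map_zero] at hn
        apply Subtype.ext
        have hc := congrArg Subtype.val hn
        rw [seg_map_coe, if_pos ⟨hpj.1, le_refl _⟩] at hc
        exact hc
    · exact Subtype.ext (seg_val_zero hpj _)
  · intro i
    have hbd : b i ≤ d i := (hrange i).2.1
    set one_b : (seg (K := K) (b i) (d i)).V (b i) :=
      ⟨1, by rw [if_pos ⟨le_refl _, hbd⟩]; trivial⟩ with honeb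
    refine ⟨(phi (b i) (Pi.single i one_b) i).1, ?_⟩
    intro p v
    by_cases hp : b i ≤ p ∧ p ≤ d i
    · set one_p : (seg (K := K) (b i) (d i)).V p :=
        (seg (K := K) (b i) (d i)).map hp.1 one_b with honep
      have honep_coe : one_p.1 = 1 := by
        rw [honep, seg_map_coe, if_pos ⟨le_refl _, hp.2⟩]
      have hv : v = v.1 • one_p := by
        apply Subtype.ext
        show v.1 = (v.1 • one_p).1
        show v.1 = v.1 • one_p.1
        rw [honep_coe, smul_eq_mul, mul_one]
      have hn := nat i i (b i) p hp.1 one_b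
      have key : (phi p (Pi.single i one_p) i).1
          = (phi (b i) (Pi.single i one_b) i).1 := by
        have hc := congrArg Subtype.val hn
        rw [seg_map_coe, if_pos ⟨le_refl _, hp.2⟩] at hc
        rw [honep]
        exact hc.symm
      apply Subtype.ext
      show (phi p (Pi.single i v) i).1 = ((phi (b i) (Pi.single i one_b) i).1 • v).1
      conv_lhs => rw [hv]
      rw [Pi.single_smul]
      erw [map_smul]
      show v.1 • (phi p (Pi.single i one_p) i).1 = (phi (b i) (Pi.single i one_b) i).1 • v.1
      rw [key, smul_eq_mul, smul_eq_mul, mul_comm]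
    · have hv : v = 0 := Subtype.ext (seg_val_zero hp _)
      rw [hv]
      have hz : Pi.single (M := fun k => (seg (K := K) (b k) (d k)).V p) i
          (0 : (seg (K := K) (b i) (d i)).V p) = 0 := Pi.single_zero i
      rw [hz]
      erw [map_zero, smul_zero]
      rfl
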